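/- On the projective line over Z_4 × Z_4, the neighbourhoods of the two distant points U = (1,0) and V = (0,1) intersect in exactly 8 points, namely precisely the type II points. -/

import Mathlib

def Admissible {R : Type*} [CommRing R] (p : R × R) : Prop :=
  ∃ M : Matrix (Fin 2) (Fin 2) R, IsUnit M ∧ M 0 0 = p.1 ∧ M 0 1 = p.2

def PairRel {R : Type*} [CommRing R] (p q : {p : R × R // Admissible p}) : Prop :=
  ∃ u : Rˣ, q.1 = ((u : R) * p.1.1, (u : R) * p.1.2)

/-- The projective line over `R`: unit-orbit classes of admissible pairs. -/
def PL (R : Type*) [CommRing R] : Type _ := Quot (@PairRel R _)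

def PL.mk {R : Type*} [CommRing R] (p : R × R) (h : Admissible p) : PL R :=
  Quot.mk _ ⟨p, h⟩

/-- `x` is a zero-divisor (counting `0` as a zero-divisor). -/
def IsZD {R : Type*} [CommRing R] (x : R) : Prop :=
  x = 0 ∨ ∃ y : R, y ≠ 0 ∧ x * y = 0

/-- A point is of type I if some representative has a unit entry. -/
def TypeI {R : Type*} [CommRing R] (X : PL R) : Prop :=
  ∃ p h, PL.mk p h = X ∧ (IsUnit p.1 ∨ IsUnit p.2)

/-- A point is of type II if every representative has both coordinates zero-divisors. -/
def TypeII {R : Type*} [CommRing R] (X : PL R) : Prop :=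
  ∀ p h, PL.mk p h = X → IsZD p.1 ∧ IsZD p.2

/-- Neighbour relation: the determinant of representatives is a non-unit. -/
def Nbr {R : Type*} [CommRing R] (X Y : PL R) : Prop :=
  ∃ p q hp hq, X = PL.mk p hp ∧ Y = PL.mk q hq ∧ ¬ IsUnit (p.1 * q.2 - p.2 * q.1)

/-- Neighbour relation phrased via zero-divisors. -/
def NbrZD {R : Type*} [CommRing R] (X Y : PL R) : Prop :=
  ∃ p q hp hq, X = PL.mk p hp ∧ Y = PL.mk q hq ∧ IsZD (p.1 * q.2 - p.2 * q.1)

/-- Distant relation: the determinant of representatives is a unit. -/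
def Distant {R : Type*} [CommRing R] (X Y : PL R) : Prop :=
  ∃ p q hp hq, X = PL.mk p hp ∧ Y = PL.mk q hq ∧ IsUnit (p.1 * q.2 - p.2 * q.1)

lemma adm {R : Type*} [CommRing R] (a b c d : R) (h : IsUnit (a * d - b * c)) :
    Admissible (a, b) :=
  ⟨!![a, b; c, d], (Matrix.isUnit_iff_isUnit_det _).2
    (by simpa [Matrix.det_fin_two_of] using h), rfl, rfl⟩

def ptU (R : Type*) [CommRing R] : PL R :=
  PL.mk (1, 0) (adm 1 0 0 1 (by simpa using isUnit_one))

def ptV (R : Type*) [CommRing R] : PL R :=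
  PL.mk (0, 1) (adm 0 1 1 0 (by simpa using (isUnit_one (M := R)).neg))

def ptW (R : Type*) [CommRing R] : PL R :=
  PL.mk (1, 1) (adm 1 1 0 1 (by simpa using isUnit_one))

abbrev R4 : Type := ZMod 4 × ZMod 4

section Gen
variable {R : Type*} [CommRing R]

lemma pairRel_equiv : Equivalence (@PairRel R _) := by
  constructor
  · intro p; exact ⟨1, by simp⟩
  · rintro p q ⟨u, hu⟩
    have h1 : q.1.1 = (u : R) * p.1.1 := by rw [hu]
    have h2 : q.1.2 = (u : R) * p.1.2 := by rw [hu]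
    refine ⟨u⁻¹, ?_⟩
    ext
    · rw [h1]; simp
    · rw [h2]; simp
  · rintro p q r ⟨u, hu⟩ ⟨v, hv⟩
    have h1 : q.1.1 = (u : R) * p.1.1 := by rw [hu]
    have h2 : q.1.2 = (u : R) * p.1.2 := by rw [hu]
    have h3 : r.1.1 = (v : R) * q.1.1 := by rw [hv]
    have h4 : r.1.2 = (v : R) * q.1.2 := by rw [hv]
    refine ⟨v * u, ?_⟩
    ext
    · rw [h3, h1]; push_cast; ring
    · rw [h4, h2]; push_cast; ring

lemma mk_eq_mk {p q : R × R} {hp : Admissible p} {hq : Admissible q} :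
    PL.mk p hp = PL.mk q hq ↔ ∃ u : Rˣ, q = ((u : R) * p.1, (u : R) * p.2) := by
  show (Quot.mk _ ⟨p, hp⟩ : Quot (@PairRel R _)) = Quot.mk _ ⟨q, hq⟩ ↔ _
  rw [Quot.eq, pairRel_equiv.eqvGen_iff]
  exact Iff.rfl

lemma admissible_iff {p : R × R} :
    Admissible p ↔ ∃ c d : R, IsUnit (p.1 * d - p.2 * c) := by
  constructor
  · rintro ⟨M, hM, h1, h2⟩
    refine ⟨M 1 0, M 1 1, ?_⟩
    have := (Matrix.isUnit_iff_isUnit_det M).1 hM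
    rwa [Matrix.det_fin_two, h1, h2] at this
  · rintro ⟨c, d, h⟩
    have : p = (p.1, p.2) := rfl
    rw [this]; exact adm _ _ c d h

lemma isZD_unit_mul (u : Rˣ) (x : R) : IsZD ((u : R) * x) ↔ IsZD x := by
  constructor
  · rintro (h | ⟨y, hy, hxy⟩)
    · left
      have := congrArg (fun z => ((u⁻¹ : Rˣ) : R) * z) h
      simpa [← mul_assoc] using this
    · right
      exact ⟨y, hy, by
        have := congrArg (fun z => ((u⁻¹ : Rˣ) : R) * z) hxy
        simpa [mul_assoc, ← mul_assoc] using this⟩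
  · rintro (h | ⟨y, hy, hxy⟩)
    · left; simp [h]
    · right; exact ⟨y, hy, by rw [mul_assoc, hxy, mul_zero]⟩

lemma isZD_neg {x : R} : IsZD (-x) ↔ IsZD x := by
  have := isZD_unit_mul (-1 : Rˣ) x
  simpa using this

lemma IsZD.not_isUnit [Nontrivial R] {x : R} (h : IsZD x) : ¬ IsUnit x := by
  rintro hu
  rcases h with h | ⟨y, hy, hxy⟩
  · subst h; exact not_isUnit_zero hu
  · rcases hu with ⟨u, rfl⟩
    apply hy
    have := congrArg (fun z => ((u⁻¹ : Rˣ) : R) * z) hxy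
    simpa [← mul_assoc] using this

lemma nbrZD_mk_mk {p q : R × R} {hp : Admissible p} {hq : Admissible q} :
    NbrZD (PL.mk p hp) (PL.mk q hq) ↔ IsZD (p.1 * q.2 - p.2 * q.1) := by
  constructor
  · rintro ⟨p', q', hp', hq', h1, h2, h3⟩
    rcases mk_eq_mk.1 h1 with ⟨u, rfl⟩
    rcases mk_eq_mk.1 h2 with ⟨v, rfl⟩
    have h3' : IsZD (((u : R) * p.1) * ((v : R) * q.2)
        - ((u : R) * p.2) * ((v : R) * q.1)) := h3
    have heq : ((u : R) * p.1) * ((v : R) * q.2) - ((u : R) * p.2) * ((v : R) * q.1)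
        = ((u * v : Rˣ) : R) * (p.1 * q.2 - p.2 * q.1) := by push_cast; ring
    rw [heq] at h3'
    exact (isZD_unit_mul _ _).1 h3' 
  · intro h
    exact ⟨p, q, hp, hq, rfl, rfl, h⟩

lemma typeII_mk {p : R × R} {hp : Admissible p} :
    TypeII (PL.mk p hp) ↔ IsZD p.1 ∧ IsZD p.2 := by
  constructor
  · intro h; exact h p hp rfl
  · rintro ⟨h1, h2⟩ q hq heq
    rcases mk_eq_mk.1 heq with ⟨u, hu⟩
    rw [hu] at h1 h2
    exact ⟨(isZD_unit_mul u q.1).1 h1, (isZD_unit_mul u q.2).1 h2⟩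

end Gen

instance dZ4 : DecidablePred (IsUnit : ZMod 4 → Prop) :=
  fun x => decidable_of_iff (∃ b, x * b = 1) isUnit_iff_exists_inv.symm
instance dR4 : DecidablePred (IsUnit : R4 → Prop) :=
  fun x => decidable_of_iff (∃ b, x * b = 1) isUnit_iff_exists_inv.symm

lemma isZD_iff_r4 (x : R4) : IsZD x ↔ ¬ IsUnit x := by
  show (x = 0 ∨ ∃ y : R4, y ≠ 0 ∧ x * y = 0) ↔ ¬ IsUnit x
  revert x; decide

/-- normalization unit component -/
def nz (a b : ZMod 4) : ZMod 4 :=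
  if a = 1 ∨ a = 3 then a else if b = 1 ∨ b = 3 then b else 1

def normU (p : R4 × R4) : R4 := (nz p.1.1 p.2.1, nz p.1.2 p.2.2)

def nrmP (p : R4 × R4) : R4 × R4 := (normU p * p.1, normU p * p.2)

def Cond (p : R4 × R4) : Prop :=
  (IsUnit p.1.1 ∨ IsUnit p.2.1) ∧ (IsUnit p.1.2 ∨ IsUnit p.2.2)

instance : DecidablePred Cond := fun p => by unfold Cond; infer_instance

set_option maxRecDepth 10000 in
lemma unit_or_unit (a b c d : ZMod 4) (h : IsUnit (a * d - b * c)) :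
    IsUnit a ∨ IsUnit b := by revert a b c d; decide

lemma cond_of_admissible {p : R4 × R4} (h : Admissible p) : Cond p := by
  rcases admissible_iff.1 h with ⟨c, d, hu⟩
  constructor
  · exact unit_or_unit _ _ c.1 d.1 (hu.map (RingHom.fst _ _))
  · exact unit_or_unit _ _ c.2 d.2 (hu.map (RingHom.snd _ _))

set_option maxRecDepth 40000 in
lemma isUnit_normU (p : R4 × R4) : IsUnit (normU p) := by revert p; decide

set_option maxRecDepth 40000 in
lemma nrmP_invariant : ∀ (p : R4 × R4) (w : R4), IsUnit w → Cond p →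
    nrmP (w * p.1, w * p.2) = nrmP p := by decide

/-- the eight canonical type II points -/
def T : Finset (R4 × R4) :=
  {((1,0),(0,1)), ((1,0),(2,1)), ((1,2),(0,1)), ((1,2),(2,1)),
   ((0,1),(1,0)), ((0,1),(1,2)), ((2,1),(1,0)), ((2,1),(1,2))}

set_option synthInstance.maxSize 400 in
set_option maxRecDepth 40000 in
lemma nrmP_mem_T : ∀ p : R4 × R4, Cond p → ¬ IsUnit p.1 → ¬ IsUnit p.2 →
    nrmP p ∈ T := by decide

set_option maxRecDepth 40000 in
lemma T_fixed : ∀ t ∈ T, nrmP t = t := by decide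

set_option maxRecDepth 40000 in
lemma T_unit : ∀ t ∈ T, IsUnit (t.1 * t.1 - t.2 * t.2) := by decide

set_option maxRecDepth 40000 in
lemma T_zd : ∀ t ∈ T, ¬ IsUnit t.1 ∧ ¬ IsUnit t.2 := by decide

lemma T_adm {t : R4 × R4} (ht : t ∈ T) : Admissible t :=
  admissible_iff.2 ⟨t.2, t.1, T_unit t ht⟩

lemma card_T : T.card = 8 := by decide

instance : Nontrivial R4 := ⟨⟨0, 1, by decide⟩⟩

lemma nbr_ptU {p : R4 × R4} {hp : Admissible p} :
    NbrZD (PL.mk p hp) (ptU R4) ↔ IsZD p.2 := by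
  rw [ptU, nbrZD_mk_mk]
  have h : p.1 * (1, 0).2 - p.2 * (1, 0).1 = -p.2 := by ring_nf
  rw [h, isZD_neg]

lemma nbr_ptV {p : R4 × R4} {hp : Admissible p} :
    NbrZD (PL.mk p hp) (ptV R4) ↔ IsZD p.1 := by
  rw [ptV, nbrZD_mk_mk]
  have h : p.1 * (0, 1).2 - p.2 * (0, 1).1 = p.1 := by ring_nf
  rw [h]

lemma ne_ptU {p : R4 × R4} {hp : Admissible p} (h : IsZD p.1) :
    PL.mk p hp ≠ ptU R4 := by
  intro he
  rw [ptU] at he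
  rcases mk_eq_mk.1 he with ⟨u, hu⟩
  have h1 : (1 : R4) = (u : R4) * p.1 := congrArg Prod.fst hu
  exact h.not_isUnit (IsUnit.of_mul_eq_one (a := p.1) (u : R4) (by rw [mul_comm, ← h1]))

lemma ne_ptV {p : R4 × R4} {hp : Admissible p} (h : IsZD p.2) :
    PL.mk p hp ≠ ptV R4 := by
  intro he
  rw [ptV] at he
  rcases mk_eq_mk.1 he with ⟨u, hu⟩
  have h1 : (1 : R4) = (u : R4) * p.2 := congrArg Prod.snd hu
  exact h.not_isUnit (IsUnit.of_mul_eq_one (a := p.2) (u : R4) (by rw [mul_comm, ← h1]))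

lemma main_iff : ∀ X : PL R4,
    (NbrZD X (ptU R4) ∧ X ≠ ptU R4 ∧ NbrZD X (ptV R4) ∧ X ≠ ptV R4) ↔ TypeII X := by
  apply Quot.ind
  rintro ⟨p, hp⟩
  show (NbrZD (PL.mk p hp) (ptU R4) ∧ PL.mk p hp ≠ ptU R4 ∧
      NbrZD (PL.mk p hp) (ptV R4) ∧ PL.mk p hp ≠ ptV R4) ↔ TypeII (PL.mk p hp)
  rw [nbr_ptU, nbr_ptV, typeII_mk]
  constructor
  · rintro ⟨h2, -, h1, -⟩; exact ⟨h1, h2⟩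
  · rintro ⟨h1, h2⟩; exact ⟨h2, ne_ptU h1, h1, ne_ptV h2⟩

lemma adm_nrm (p : R4 × R4) (hp : Admissible p) : Admissible (nrmP p) := by
  rcases admissible_iff.1 hp with ⟨c, d, h⟩
  refine admissible_iff.2 ⟨c, d, ?_⟩
  have : (nrmP p).1 * d - (nrmP p).2 * c = normU p * (p.1 * d - p.2 * c) := by
    show normU p * p.1 * d - normU p * p.2 * c = _; ring
  rw [this]
  exact (isUnit_normU p).mul h

def nrm : PL R4 → R4 × R4 :=
  Quot.lift (fun a => nrmP a.1) (by
    rintro a b ⟨u, hu⟩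
    show nrmP a.1 = nrmP b.1
    rw [hu]
    exact (nrmP_invariant a.1 (u : R4) u.isUnit (cond_of_admissible a.2)).symm)

lemma nrm_mk (p : R4 × R4) (hp : Admissible p) : nrm (PL.mk p hp) = nrmP p := rfl

lemma mk_nrm : ∀ (X : PL R4) (h : Admissible (nrm X)), PL.mk (nrm X) h = X := by
  apply Quot.ind
  rintro ⟨p, hp⟩ h
  show PL.mk (nrmP p) h = PL.mk p hp
  rcases isUnit_normU p with ⟨u, hu⟩
  symm
  apply mk_eq_mk.2
  refine ⟨u, ?_⟩
  rw [hu]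
  rfl

lemma memT : ∀ X : PL R4,
    (NbrZD X (ptU R4) ∧ X ≠ ptU R4 ∧ NbrZD X (ptV R4) ∧ X ≠ ptV R4) → nrm X ∈ T := by
  apply Quot.ind
  rintro ⟨p, hp⟩ h
  obtain ⟨h1, h2⟩ := typeII_mk.1 ((main_iff _).1 h)
  exact nrmP_mem_T p (cond_of_admissible hp) ((isZD_iff_r4 _).1 h1) ((isZD_iff_r4 _).1 h2)

lemma PT (t : R4 × R4) (ht : t ∈ T) :
    NbrZD (PL.mk t (T_adm ht)) (ptU R4) ∧ PL.mk t (T_adm ht) ≠ ptU R4 ∧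
    NbrZD (PL.mk t (T_adm ht)) (ptV R4) ∧ PL.mk t (T_adm ht) ≠ ptV R4 :=
  (main_iff _).2 (typeII_mk.2
    ⟨(isZD_iff_r4 _).2 (T_zd t ht).1, (isZD_iff_r4 _).2 (T_zd t ht).2⟩)

theorem stmt9 :
    (∀ X : PL R4,
      (NbrZD X (ptU R4) ∧ X ≠ ptU R4 ∧ NbrZD X (ptV R4) ∧ X ≠ ptV R4) ↔ TypeII X) ∧
    Nat.card {X : PL R4 //
      NbrZD X (ptU R4) ∧ X ≠ ptU R4 ∧ NbrZD X (ptV R4) ∧ X ≠ ptV R4} = 8 := by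
  refine ⟨main_iff, ?_⟩
  have e : {X : PL R4 //
      NbrZD X (ptU R4) ∧ X ≠ ptU R4 ∧ NbrZD X (ptV R4) ∧ X ≠ ptV R4} ≃
      {t : R4 × R4 // t ∈ T} :=
    { toFun := fun x => ⟨nrm x.1, memT x.1 x.2⟩
      invFun := fun t => ⟨PL.mk t.1 (T_adm t.2), PT t.1 t.2⟩
      left_inv := fun x => Subtype.ext (mk_nrm x.1 _)
      right_inv := fun t => Subtype.ext (by
        show nrm (PL.mk t.1 _) = t.1
        rw [nrm_mk]
        exact T_fixed t.1 t.2) }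
  rw [Nat.card_congr e, Nat.card_eq_fintype_card, Fintype.card_coe, card_T]
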